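/- Let X be a restriction category with restriction coproducts and a restriction zero, and suppose the coproduct injections are restriction monics. Then the initial object 0 is a restriction zero if and only if the maps i* : A + B → A (restriction retractions of the first injections) are natural in B; they are always natural in A. -/
import Mathlib


open CategoryTheory CategoryTheory.Limits

universe v u

/-- A restriction category: a category with an operation assigning to each
morphism `f : A ⟶ B` a morphism `ρ f : A ⟶ A` satisfying axioms R.1–R.4.
(Composition is written diagrammatically: `f ≫ g` is "first `f`, then `g`",
so the paper's `g ∘ f` is `f ≫ g`.) -/
class RestrictionCategory (C : Type u) [Category.{v} C] where
  ρ : ∀ {A B : C}, (A ⟶ B) → (A ⟶ A)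
  R1 : ∀ {A B : C} (f : A ⟶ B), ρ f ≫ f = f
  R2 : ∀ {A B D : C} (f : A ⟶ B) (g : A ⟶ D), ρ f ≫ ρ g = ρ g ≫ ρ f
  R3 : ∀ {A B D : C} (f : A ⟶ B) (g : A ⟶ D), ρ (ρ f ≫ g) = ρ f ≫ ρ g
  R4 : ∀ {A B D : C} (f : A ⟶ B) (g : B ⟶ D), f ≫ ρ g = ρ (f ≫ g) ≫ f

open RestrictionCategory

section Aux

variable {C : Type u} [Category.{v} C] [RestrictionCategory C]

lemma rho_id (A : C) : ρ (𝟙 A) = 𝟙 A := by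
  have h := R1 (𝟙 A)
  simpa using h

lemma rho_comp_left {A B D : C} (f : A ⟶ B) (g : B ⟶ D) :
    ρ f ≫ ρ (f ≫ g) = ρ (f ≫ g) := by
  have h : ρ f ≫ (f ≫ g) = f ≫ g := by rw [← Category.assoc, R1]
  conv_rhs => rw [← h, R3]

lemma rho_comp_left' {A B D : C} (f : A ⟶ B) (g : B ⟶ D) :
    ρ (f ≫ g) ≫ ρ f = ρ (f ≫ g) := by
  rw [R2, rho_comp_left]

lemma rho_comp_rho {A B D : C} (f : A ⟶ B) (g : B ⟶ D) :
    ρ (f ≫ ρ g) = ρ (f ≫ g) := by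
  rw [R4, R3, rho_comp_left']

/-- Uniqueness of restriction retractions. -/
lemma retr_unique {A B : C} (m : A ⟶ B) (r r' : B ⟶ A)
    (h1 : m ≫ r = 𝟙 A) (h2 : r ≫ m = ρ r)
    (h1' : m ≫ r' = 𝟙 A) (h2' : r' ≫ m = ρ r') : r = r' := by
  have e1 : ρ r ≫ r' = r := by
    rw [← h2, Category.assoc, h1', Category.comp_id]
  have e1' : ρ r' ≫ r = r' := by
    rw [← h2', Category.assoc, h1, Category.comp_id]
  have e2 : ρ r ≫ ρ r' = ρ r := by rw [← R3, e1]
  have e2' : ρ r' ≫ ρ r = ρ r' := by rw [← R3, e1']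
  have e3 : ρ r = ρ r' := by rw [← e2, R2, e2']
  rw [← e1', ← e3]
  exact (R1 r).symm

end Aux

/-- Let `X` be a restriction category with coproducts whose injections are
restriction monics (with given restriction retractions `istar`, `jstar`).
Then the initial object is a restriction zero (i.e. it is also terminal, and
the zero endomaps are restriction idempotents) if and only if the maps
`istar A B : A ⨿ B ⟶ A` are natural in `B`; and they are always natural
in `A`. -/
theorem stmt_9 {C : Type u} [Category.{v} C] [RestrictionCategory C]
    [HasBinaryCoproducts C] [HasInitial C]
    (istar : ∀ A B : C, (A ⨿ B) ⟶ A) (jstar : ∀ A B : C, (A ⨿ B) ⟶ B)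
    (hi : ∀ A B : C, (coprod.inl : A ⟶ A ⨿ B) ≫ istar A B = 𝟙 A ∧
      istar A B ≫ (coprod.inl : A ⟶ A ⨿ B) = ρ (istar A B))
    (hj : ∀ A B : C, (coprod.inr : B ⟶ A ⨿ B) ≫ jstar A B = 𝟙 B ∧
      jstar A B ≫ (coprod.inr : B ⟶ A ⨿ B) = ρ (jstar A B)) :
    ((∃ hT : IsTerminal (⊥_ C), ∀ A : C,
        ρ (hT.from A ≫ initial.to A) = hT.from A ≫ initial.to A) ↔
     (∀ (A B B' : C) (g : B ⟶ B'),
        coprod.map (𝟙 A) g ≫ istar A B' = istar A B)) ∧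
    (∀ (A A' B : C) (f : A ⟶ A'),
        coprod.map f (𝟙 B) ≫ istar A' B = istar A B ≫ f) := by
  -- the candidate "to the terminal object" maps
  set t : ∀ B : C, B ⟶ ⊥_ C := fun B => coprod.inr ≫ istar (⊥_ C) B with ht
  -- L1 : basic relation coming from `istar ≫ inl = ρ (istar)`
  have L1 : ∀ A B : C, ρ ((coprod.inr : B ⟶ A ⨿ B) ≫ istar A B) ≫ coprod.inr
      = ((coprod.inr : B ⟶ A ⨿ B) ≫ istar A B) ≫ coprod.inl := by
    intro A B
    calc ρ ((coprod.inr : B ⟶ A ⨿ B) ≫ istar A B) ≫ coprod.inr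
        = coprod.inr ≫ ρ (istar A B) := (R4 _ _).symm
      _ = coprod.inr ≫ istar A B ≫ coprod.inl := by rw [← (hi A B).2]
      _ = ((coprod.inr : B ⟶ A ⨿ B) ≫ istar A B) ≫ coprod.inl := by
          rw [Category.assoc]
  -- L2 : `t B` is "nowhere defined"
  have L2 : ∀ A B : C, t B ≫ initial.to (A ⨿ B) = ρ (t B) ≫ coprod.inr := by
    intro A B
    have h1 := L1 (⊥_ C) B
    have h2 := congrArg (· ≫ coprod.desc (initial.to (A ⨿ B))
      (coprod.inr : B ⟶ A ⨿ B)) h1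
    simp only [Category.assoc, coprod.inl_desc, coprod.inr_desc] at h2
    rw [← Category.assoc] at h2
    show (coprod.inr ≫ istar (⊥_ C) B) ≫ initial.to (A ⨿ B)
      = ρ (coprod.inr ≫ istar (⊥_ C) B) ≫ coprod.inr
    exact h2.symm
  -- L3 : the formula for `istar`
  have L3 : ∀ A B : C, istar A B = coprod.desc (𝟙 A) (t B ≫ initial.to A) := by
    intro A B
    refine retr_unique coprod.inl _ _ (hi A B).1 (hi A B).2 (coprod.inl_desc _ _) ?_
    apply coprod.hom_ext
    · rw [← Category.assoc, coprod.inl_desc, Category.id_comp, R4,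
        coprod.inl_desc, rho_id, Category.id_comp]
    · rw [← Category.assoc, coprod.inr_desc, R4, coprod.inr_desc]
      have e1 : ρ (t B ≫ initial.to A) = ρ (t B) := by
        rw [← rho_comp_rho]
        congr 1
        rw [show ρ (initial.to A) = 𝟙 (⊥_ C) from initial.hom_ext _ _,
          Category.comp_id]
      rw [e1, ← L2 A B, Category.assoc]
      congr 1
      exact initial.hom_ext _ _
  -- component formula
  have F : ∀ A B : C, (coprod.inr : B ⟶ A ⨿ B) ≫ istar A B
      = t B ≫ initial.to A := by
    intro A B
    rw [L3 A B, coprod.inr_desc]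
  constructor
  · constructor
    · -- restriction zero → naturality in B
      rintro ⟨hT, -⟩ A B B' g
      apply coprod.hom_ext
      · rw [← Category.assoc, coprod.inl_map, Category.assoc, (hi A B').1,
          (hi A B).1, Category.comp_id]
      · rw [← Category.assoc, coprod.inr_map, Category.assoc, F A B', F A B,
          ← Category.assoc]
        congr 1
        exact hT.hom_ext _ _
    · -- naturality in B → restriction zero
      intro N
      have uniq : ∀ (B : C) (m : B ⟶ ⊥_ C), m = t B := by
        intro B m
        have h := congrArg ((coprod.inr : B ⟶ (⊥_ C) ⨿ B) ≫ ·)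
          (N (⊥_ C) B (⊥_ C) m)
        simp only [← Category.assoc, coprod.inr_map] at h
        rw [Category.assoc] at h
        rw [show (coprod.inr : ⊥_ C ⟶ (⊥_ C) ⨿ (⊥_ C)) ≫ istar (⊥_ C) (⊥_ C)
            = 𝟙 (⊥_ C) from initial.hom_ext _ _, Category.comp_id] at h
        exact h
      refine ⟨IsTerminal.ofUniqueHom t uniq, fun A => ?_⟩
      have h0 : (IsTerminal.ofUniqueHom t uniq).from A = t A :=
        (IsTerminal.ofUniqueHom t uniq).hom_ext _ _
      rw [h0, ← F A A]
      set u := (coprod.inr : A ⟶ A ⨿ A) ≫ istar A A with hu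
      -- ρ u = u ≫ (inl ≫ jstar)
      have hv : ρ u = u ≫ (coprod.inl ≫ jstar A A) := by
        have h1 := congrArg (· ≫ jstar A A) (L1 A A)
        simp only [Category.assoc, (hj A A).1, Category.comp_id] at h1
        rw [hu, h1, Category.assoc]
      -- u is idempotent
      have huu : u ≫ u = u := by
        have h := congrArg ((coprod.inr : A ⟶ A ⨿ A) ≫ ·) (N A A A u)
        simp only [← Category.assoc, coprod.inr_map] at h
        rw [Category.assoc] at h
        exact h
      have h5 : u ≫ ρ u = u := by rw [R4, huu, R1]
      have h6 : u ≫ ρ u = ρ u := by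
        rw [hv, ← Category.assoc, huu]
      rw [← h6, h5]
  · -- naturality in A (always)
    intro A A' B f
    apply coprod.hom_ext
    · rw [← Category.assoc, coprod.inl_map, Category.assoc, (hi A' B).1,
        Category.comp_id, ← Category.assoc, (hi A B).1, Category.id_comp]
    · rw [← Category.assoc, coprod.inr_map, Category.id_comp, F A' B,
        ← Category.assoc, F A B]
      simp only [Category.assoc,
        initial.hom_ext (initial.to A ≫ f) (initial.to A')]
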